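/- Soundness and completeness for NDMs: A formula φ ∈ L is derivable in the logic LDA if and only if φ is valid for the class of notional doxastic models. -/

import Mathlib

namespace LDAPaper

/-- Formulas over atomic propositions `ℕ` and agents `Agt`.
`expbel i α` is the explicit belief operator `△ᵢ α`; `impbel i φ` is the implicit
belief operator `□ᵢ φ`. -/
inductive Frm (Agt : Type) : Type
  | atom : ℕ → Frm Agt
  | neg : Frm Agt → Frm Agt
  | and : Frm Agt → Frm Agt → Frm Agt
  | expbel : Agt → Frm Agt → Frm Agt
  | impbel : Agt → Frm Agt → Frm Agt

namespace Frm

variable {Agt : Type}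

/-- Membership in the sublanguage `L0` (no implicit-belief operator). -/
def isL0 : Frm Agt → Prop
  | atom _ => True
  | neg α => isL0 α
  | and α β => isL0 α ∧ isL0 β
  | expbel _ α => isL0 α
  | impbel _ _ => False

/-- Membership in the language `L`: the explicit belief operator applies only to
`L0`-formulas. -/
def isL : Frm Agt → Prop
  | atom _ => True
  | neg φ => isL φ
  | and φ ψ => isL φ ∧ isL ψ
  | expbel _ α => isL0 α
  | impbel _ φ => isL φ

/-- Material implication, defined from `¬` and `∧` as usual. -/
def imp (φ ψ : Frm Agt) : Frm Agt := neg (and φ (neg ψ))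

/-- Disjunction, defined from `¬` and `∧` as usual. -/
def or (φ ψ : Frm Agt) : Frm Agt := neg (and (neg φ) (neg ψ))

/-- Biconditional, defined from `¬` and `∧` as usual. -/
def iff (φ ψ : Frm Agt) : Frm Agt := and (imp φ ψ) (imp ψ φ)

/-- The set of atomic propositions occurring in a formula. -/
def atomsOf : Frm Agt → Set ℕ
  | atom p => {p}
  | neg φ => atomsOf φ
  | and φ ψ => atomsOf φ ∪ atomsOf ψ
  | expbel _ φ => atomsOf φ
  | impbel _ φ => atomsOf φ

end Frm

/-- A model `(W, D, N, V)`: worlds, doxastic function, notional function, valuation. -/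
structure PreNDM (Agt : Type) where
  W : Type
  D : Agt → W → Set (Frm Agt)
  N : Agt → W → Set W
  V : ℕ → Set W

namespace PreNDM

variable {Agt : Type}

/-- Truth of a formula at a world of a model. -/
def sat (M : PreNDM Agt) : M.W → Frm Agt → Prop
  | w, .atom p => w ∈ M.V p
  | w, .neg φ => ¬ sat M w φ
  | w, .and φ ψ => sat M w φ ∧ sat M w ψ
  | w, .expbel i α => α ∈ M.D i w
  | w, .impbel i φ => ∀ v ∈ M.N i w, sat M v φ

end PreNDM

/-- Quasi-notional doxastic model: belief bases consist of `L0`-formulas,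
(C1*) `N(i,w) ⊆ ∩_{α ∈ D(i,w)} ‖α‖`, and (C2) `N(i,w) ≠ ∅`. -/
def isQNDM {Agt : Type} (M : PreNDM Agt) : Prop :=
  (∀ i w, ∀ α ∈ M.D i w, α.isL0) ∧
  (∀ i w, ∀ v ∈ M.N i w, ∀ α ∈ M.D i w, M.sat v α) ∧
  (∀ i w, (M.N i w).Nonempty)

/-- Notional doxastic model: belief bases consist of `L0`-formulas,
(C1) `N(i,w) = ∩_{α ∈ D(i,w)} ‖α‖`, and (C2) `N(i,w) ≠ ∅`. -/
def isNDM {Agt : Type} (M : PreNDM Agt) : Prop :=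
  (∀ i w, ∀ α ∈ M.D i w, α.isL0) ∧
  (∀ i w, M.N i w = {v | ∀ α ∈ M.D i w, M.sat v α}) ∧
  (∀ i w, (M.N i w).Nonempty)

/-- A model is finite iff `W` is finite and every `D(i,w)` and every
`{p ∈ Atm : w ∈ V(p)}` is finite. -/
def finiteModel {Agt : Type} (M : PreNDM Agt) : Prop :=
  Finite M.W ∧ (∀ i w, (M.D i w).Finite) ∧ (∀ w, {p : ℕ | w ∈ M.V p}.Finite)

end LDAPaper
namespace LDAPaper

/-- A multi-agent belief base `B = (B_1,…,B_n, V)`. -/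
structure MABase (Agt : Type) where
  B : Agt → Set (Frm Agt)
  V : Set ℕ

namespace MABase

variable {Agt : Type}

/-- Satisfaction of `L0`-formulas by a multi-agent belief base. -/
def bsat (b : MABase Agt) : Frm Agt → Prop
  | .atom p => p ∈ b.V
  | .neg α => ¬ bsat b α
  | .and α β => bsat b α ∧ bsat b β
  | .expbel i α => α ∈ b.B i
  | .impbel _ _ => True

/-- Well-formedness: each agent's belief base consists of `L0`-formulas. -/
def wf (b : MABase Agt) : Prop := ∀ i, ∀ α ∈ b.B i, α.isL0

/-- Doxastic alternative relation: `b R_i b'` iff `b'` satisfies every formula in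
agent `i`'s belief base in `b`. -/
def R (i : Agt) (b b' : MABase Agt) : Prop := ∀ α ∈ b.B i, bsat b' α

end MABase

/-- Satisfaction of `L`-formulas by a multi-agent belief model `(b, Cxt)`. -/
def msat {Agt : Type} (Cxt : Set (MABase Agt)) : MABase Agt → Frm Agt → Prop
  | b, .atom p => p ∈ b.V
  | b, .neg φ => ¬ msat Cxt b φ
  | b, .and φ ψ => msat Cxt b φ ∧ msat Cxt b ψ
  | b, .expbel i α => α ∈ b.B i
  | b, .impbel i φ => ∀ b' ∈ Cxt, MABase.R i b b' → msat Cxt b' φ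

/-- Consistent multi-agent belief model: all bases involved are well formed and
for every agent `i` and every `b' ∈ Cxt ∪ {b}` there is `b'' ∈ Cxt` with `b' R_i b''`. -/
def isCMAB {Agt : Type} (b : MABase Agt) (Cxt : Set (MABase Agt)) : Prop :=
  (∀ b' ∈ insert b Cxt, b'.wf) ∧
  (∀ i : Agt, ∀ b' ∈ insert b Cxt, ∃ b'' ∈ Cxt, MABase.R i b' b'')

/-- Boolean evaluation of a formula, treating atoms, explicit-belief formulas and
implicit-belief formulas as propositional atoms. -/
def boolEval {Agt : Type} (v : Frm Agt → Bool) : Frm Agt → Bool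
  | .neg φ => ! boolEval v φ
  | .and φ ψ => boolEval v φ && boolEval v ψ
  | φ => v φ

/-- Instances of classical propositional tautologies. -/
def Tautology {Agt : Type} (φ : Frm Agt) : Prop :=
  ∀ v : Frm Agt → Bool, boolEval v φ = true

/-- Derivability in the logic LDA: classical propositional logic over `L` plus
axioms K, D, Int and the necessitation rule for implicit belief. -/
inductive LDA {Agt : Type} : Frm Agt → Prop
  | taut {φ : Frm Agt} : φ.isL → Tautology φ → LDA φ
  | axK (i : Agt) {φ ψ : Frm Agt} : φ.isL → ψ.isL →
      LDA (((Frm.impbel i φ).and (Frm.impbel i (φ.imp ψ))).imp (Frm.impbel i ψ))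
  | axD (i : Agt) {φ : Frm Agt} : φ.isL →
      LDA (Frm.neg ((Frm.impbel i φ).and (Frm.impbel i (Frm.neg φ))))
  | axInt (i : Agt) {α : Frm Agt} : α.isL0 →
      LDA ((Frm.expbel i α).imp (Frm.impbel i α))
  | mp {φ ψ : Frm Agt} : LDA (φ.imp ψ) → LDA φ → LDA ψ
  | nec (i : Agt) {φ : Frm Agt} : LDA φ → LDA (Frm.impbel i φ)

/-- Conjunction of a list of formulas (the empty conjunction is a tautology). -/
def conjList {Agt : Type} : List (Frm Agt) → Frm Agt
  | [] => Frm.neg ((Frm.atom 0).and (Frm.neg (Frm.atom 0)))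
  | φ :: l => φ.and (conjList l)

/-- A set of formulas is LDA-consistent iff no contradiction is derivable in LDA
from finitely many of its members. -/
def Consistent {Agt : Type} (Δ : Set (Frm Agt)) : Prop :=
  ∀ l : List (Frm Agt), (∀ ψ ∈ l, ψ ∈ Δ) → ¬ LDA (Frm.neg (conjList l))

/-- Maximally LDA-consistent set of `L`-formulas. -/
def MCS {Agt : Type} (Γ : Set (Frm Agt)) : Prop :=
  (∀ φ ∈ Γ, φ.isL) ∧ Consistent Γ ∧
    ∀ Δ : Set (Frm Agt), (∀ φ ∈ Δ, φ.isL) → Consistent Δ → Γ ⊆ Δ → Δ = Γ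

/-- Canonical doxastic function: `α ∈ D^c(i,w)` iff `△ᵢα ∈ w`. -/
def canonD {Agt : Type} (i : Agt) (w : {Γ : Set (Frm Agt) // MCS Γ}) : Set (Frm Agt) :=
  {α | Frm.expbel i α ∈ w.val}

/-- Canonical notional function: `v ∈ N^c(i,w)` iff `□ᵢφ ∈ w` implies `φ ∈ v`. -/
def canonN {Agt : Type} (i : Agt) (w : {Γ : Set (Frm Agt) // MCS Γ}) :
    Set {Γ : Set (Frm Agt) // MCS Γ} :=
  {v | ∀ φ : Frm Agt, Frm.impbel i φ ∈ w.val → φ ∈ v.val}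

/-- Canonical valuation: `w ∈ V^c(p)` iff `p ∈ w`. -/
def canonV {Agt : Type} (p : ℕ) : Set {Γ : Set (Frm Agt) // MCS Γ} :=
  {w | Frm.atom p ∈ w.val}

/-- The canonical model of LDA: worlds are the maximally LDA-consistent sets. -/
def canonM (Agt : Type) : PreNDM Agt where
  W := {Γ : Set (Frm Agt) // MCS Γ}
  D := canonD
  N := canonN
  V := canonV

/-- `w ≡_Σ v` iff `w` and `v` satisfy the same formulas of `Σ`. -/
def filtRel {Agt : Type} (M : PreNDM Agt) (S : Set (Frm Agt)) (w v : M.W) : Prop :=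
  ∀ φ ∈ S, (M.sat w φ ↔ M.sat v φ)

/-- The setoid of `≡_Σ`-equivalent worlds. -/
def filtSetoid {Agt : Type} (M : PreNDM Agt) (S : Set (Frm Agt)) : Setoid M.W where
  r := filtRel M S
  iseqv := ⟨fun _ _ _ => Iff.rfl, fun h φ hφ => (h φ hφ).symm,
    fun h1 h2 φ hφ => (h1 φ hφ).trans (h2 φ hφ)⟩

/-- The `≡_Σ`-equivalence class `|w|_Σ` of a world `w`. -/
def filtMk {Agt : Type} (M : PreNDM Agt) (S : Set (Frm Agt)) (w : M.W) :
    Quotient (filtSetoid M S) :=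
  Quotient.mk (filtSetoid M S) w

/-- Closure under subformulas. -/
def SubClosed {Agt : Type} (S : Set (Frm Agt)) : Prop :=
  (∀ φ : Frm Agt, Frm.neg φ ∈ S → φ ∈ S) ∧
  (∀ φ ψ : Frm Agt, Frm.and φ ψ ∈ S → φ ∈ S ∧ ψ ∈ S) ∧
  (∀ (i : Agt) (φ : Frm Agt), Frm.expbel i φ ∈ S → φ ∈ S) ∧
  (∀ (i : Agt) (φ : Frm Agt), Frm.impbel i φ ∈ S → φ ∈ S)

/-- The filtration `M_Σ = (W_Σ, D_Σ, N_Σ, V_Σ)` of `M` through `Σ`: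
`W_Σ` is the quotient of `W` by `≡_Σ`;
`D_Σ(i,|w|) = (∩_{v ∈ |w|} D(i,v)) ∩ Σ`;
`N_Σ(i,|w|) = {|v| : v ∈ N(i,w)}` (smallest filtration);
`V_Σ(p) = {|w| : (M,w) ⊨ p}` if `p` occurs in `Σ`, and `∅` otherwise. -/
def filtModel {Agt : Type} (M : PreNDM Agt) (S : Set (Frm Agt)) : PreNDM Agt where
  W := Quotient (filtSetoid M S)
  D := fun i x => {α | α ∈ S ∧ ∀ v : M.W, filtMk M S v = x → α ∈ M.D i v}
  N := fun i x => {y | ∃ w v : M.W, filtMk M S w = x ∧ filtMk M S v = y ∧ v ∈ M.N i w}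
  V := fun p =>
    {x | (∃ φ ∈ S, p ∈ φ.atomsOf) ∧ ∃ w : M.W, filtMk M S w = x ∧ M.sat w (Frm.atom p)}

/-- The language of Fagin & Halpern's logic of general awareness:
`bel` is implicit belief `B_i`, `aware` is awareness `A_i`, `expk` is explicit
belief `X_i`. -/
inductive LGA (Agt : Type) : Type
  | atom : ℕ → LGA Agt
  | neg : LGA Agt → LGA Agt
  | and : LGA Agt → LGA Agt → LGA Agt
  | bel : Agt → LGA Agt → LGA Agt
  | aware : Agt → LGA Agt → LGA Agt
  | expk : Agt → LGA Agt → LGA Agt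

/-- An awareness structure `(S, R_1,…,R_n, A_1,…,A_n, π)`. -/
structure AwStruct (Agt : Type) where
  S : Type
  R : Agt → S → S → Prop
  A : Agt → S → Set (LGA Agt)
  val : ℕ → Set S

namespace AwStruct

variable {Agt : Type}

/-- Truth in an awareness structure; `X_i φ` holds iff both `B_i φ` and `A_i φ` hold. -/
def sat (M : AwStruct Agt) : M.S → LGA Agt → Prop
  | s, .atom p => s ∈ M.val p
  | s, .neg φ => ¬ sat M s φ
  | s, .and φ ψ => sat M s φ ∧ sat M s ψ
  | s, .bel i φ => ∀ t, M.R i s t → sat M t φ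
  | s, .aware i φ => φ ∈ M.A i s
  | s, .expk i φ => (∀ t, M.R i s t → sat M t φ) ∧ φ ∈ M.A i s

/-- An awareness structure is serial iff every `R_i` is serial. -/
def serial (M : AwStruct Agt) : Prop := ∀ i s, ∃ t, M.R i s t

end AwStruct

/-- The translation `tr` from `L` to the language of general awareness. -/
def tr {Agt : Type} : Frm Agt → LGA Agt
  | .atom p => .atom p
  | .neg φ => .neg (tr φ)
  | .and φ ψ => .and (tr φ) (tr ψ)
  | .expbel i α => .expk i (tr α)
  | .impbel i φ => .bel i (tr φ)

end LDAPaper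

/-! ### Auxiliary development for soundness and completeness -/

namespace LDAPaper

attribute [local instance] Classical.propDecidable

variable {Agt : Type}

/-! #### Basic facts about `isL`, `isL0`, `boolEval` -/

lemma isL0_isL : ∀ φ : Frm Agt, φ.isL0 → φ.isL := by
  intro φ; induction φ <;> simp [Frm.isL0, Frm.isL] at * <;> tauto

@[simp] lemma isL_atom (p : ℕ) : (Frm.atom p : Frm Agt).isL := trivial
@[simp] lemma isL_neg (φ : Frm Agt) : (Frm.neg φ).isL ↔ φ.isL := Iff.rfl
@[simp] lemma isL_and (φ ψ : Frm Agt) : (Frm.and φ ψ).isL ↔ φ.isL ∧ ψ.isL := Iff.rfl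
@[simp] lemma isL_imp (φ ψ : Frm Agt) : (φ.imp ψ).isL ↔ φ.isL ∧ ψ.isL := Iff.rfl
@[simp] lemma isL_impbel (i : Agt) (φ : Frm Agt) : (Frm.impbel i φ).isL ↔ φ.isL := Iff.rfl
@[simp] lemma isL_expbel (i : Agt) (φ : Frm Agt) : (Frm.expbel i φ).isL ↔ φ.isL0 := Iff.rfl

lemma isL_conjList {l : List (Frm Agt)} (h : ∀ ψ ∈ l, ψ.isL) : (conjList l).isL := by
  induction l with
  | nil => simp [conjList, Frm.isL, Frm.isL0]
  | cons a t ih =>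
      simp only [conjList, isL_and]
      exact ⟨h a (by simp), ih fun ψ hψ => h ψ (by simp [hψ])⟩

@[simp] lemma boolEval_neg (v : Frm Agt → Bool) (φ : Frm Agt) :
    boolEval v (Frm.neg φ) = !boolEval v φ := rfl

@[simp] lemma boolEval_and (v : Frm Agt → Bool) (φ ψ : Frm Agt) :
    boolEval v (Frm.and φ ψ) = (boolEval v φ && boolEval v ψ) := rfl

lemma evalT_neg (v : Frm Agt → Bool) (φ : Frm Agt) :
    boolEval v (Frm.neg φ) = true ↔ ¬ (boolEval v φ = true) := by
  simp

lemma evalT_and (v : Frm Agt → Bool) (φ ψ : Frm Agt) :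
    boolEval v (Frm.and φ ψ) = true ↔ (boolEval v φ = true ∧ boolEval v ψ = true) := by
  simp

lemma evalT_imp (v : Frm Agt → Bool) (φ ψ : Frm Agt) :
    boolEval v (φ.imp ψ) = true ↔ (boolEval v φ = true → boolEval v ψ = true) := by
  simp only [Frm.imp, boolEval_neg, boolEval_and, Bool.not_eq_true', Bool.and_eq_false_iff,
    Bool.not_eq_true]
  rcases h : boolEval v φ <;> rcases h2 : boolEval v ψ <;> simp

lemma evalT_conj (v : Frm Agt → Bool) (l : List (Frm Agt)) :
    boolEval v (conjList l) = true ↔ ∀ ψ ∈ l, boolEval v ψ = true := by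
  induction l with
  | nil =>
      simp only [conjList, List.not_mem_nil]
      cases h : v (Frm.atom 0) <;> simp [boolEval, h]
  | cons a t ih =>
      simp only [conjList, evalT_and, ih, List.mem_cons]
      constructor
      · rintro ⟨h1, h2⟩ ψ (rfl | hψ); exacts [h1, h2 ψ hψ]
      · intro h; exact ⟨h a (Or.inl rfl), fun ψ hψ => h ψ (Or.inr hψ)⟩

end LDAPaper

namespace LDAPaper

variable {Agt : Type}

/-! #### Derived rules of LDA -/

lemma box_collect (i : Agt) {A B : Frm Agt} (hA : A.isL) (hB : B.isL) :
    LDA ((Frm.impbel i A).imp ((Frm.impbel i B).imp (Frm.impbel i (A.and B)))) := by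
  have t1 : LDA (A.imp (B.imp (A.and B))) := by
    apply LDA.taut (by simp [hA, hB])
    intro v; simp only [evalT_imp, evalT_and]; tauto
  have n1 := LDA.nec i t1
  have k1 := LDA.axK i (φ := A) (ψ := B.imp (A.and B)) hA (by simp [hA, hB])
  have step : LDA ((Frm.impbel i A).imp (Frm.impbel i (B.imp (A.and B)))) := by
    have T : LDA (((((Frm.impbel i A).and (Frm.impbel i (A.imp (B.imp (A.and B))))).imp
        (Frm.impbel i (B.imp (A.and B))))).imp
        ((Frm.impbel i (A.imp (B.imp (A.and B)))).imp
        ((Frm.impbel i A).imp (Frm.impbel i (B.imp (A.and B)))))) := by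
      apply LDA.taut (by simp [hA, hB])
      intro v; simp only [evalT_imp, evalT_and]; tauto
    exact LDA.mp (LDA.mp T k1) n1
  have k2 := LDA.axK i (φ := B) (ψ := A.and B) hB (by simp [hA, hB])
  have T2 : LDA (((Frm.impbel i A).imp (Frm.impbel i (B.imp (A.and B)))).imp
      (((((Frm.impbel i B).and (Frm.impbel i (B.imp (A.and B)))).imp
        (Frm.impbel i (A.and B)))).imp
      ((Frm.impbel i A).imp ((Frm.impbel i B).imp (Frm.impbel i (A.and B)))))) := by
    apply LDA.taut (by simp [hA, hB])
    intro v; simp only [evalT_imp, evalT_and]; tauto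
  exact LDA.mp (LDA.mp T2 step) k2

lemma box_conj_list (i : Agt) : ∀ {l : List (Frm Agt)}, (∀ χ ∈ l, χ.isL) →
    LDA ((conjList (l.map (Frm.impbel i))).imp (Frm.impbel i (conjList l))) := by
  intro l
  induction l with
  | nil =>
      intro _
      have hc : LDA (conjList ([] : List (Frm Agt))) := by
        apply LDA.taut (isL_conjList (by simp))
        intro v; rw [evalT_conj]; simp
      have hbox := LDA.nec i hc
      have T : LDA ((Frm.impbel i (conjList ([] : List (Frm Agt)))).imp
          ((conjList (([] : List (Frm Agt)).map (Frm.impbel i))).imp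
            (Frm.impbel i (conjList ([] : List (Frm Agt)))))) := by
        apply LDA.taut
        · exact ⟨isL_conjList (by simp), isL_conjList (by simp), isL_conjList (by simp)⟩
        · intro v; simp only [evalT_imp]; tauto
      exact LDA.mp T hbox
  | cons a t ih =>
      intro hl
      have ha : a.isL := hl a (by simp)
      have ht : ∀ χ ∈ t, χ.isL := fun χ hχ => hl χ (by simp [hχ])
      have hIH := ih ht
      have hcol := box_collect i (A := a) (B := conjList t) ha (isL_conjList ht)
      -- (M → C) → ((B' → (C → D)) → ((B' ∧ M) → D))
      have T : LDA (((conjList (t.map (Frm.impbel i))).imp (Frm.impbel i (conjList t))).imp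
          (((Frm.impbel i a).imp ((Frm.impbel i (conjList t)).imp
              (Frm.impbel i (a.and (conjList t))))).imp
            (((Frm.impbel i a).and (conjList (t.map (Frm.impbel i)))).imp
              (Frm.impbel i (a.and (conjList t)))))) := by
        apply LDA.taut
        · refine ⟨⟨isL_conjList ?_, isL_conjList ht⟩, ⟨ha, isL_conjList ht, ha,
            isL_conjList ht⟩, ⟨ha, isL_conjList ?_⟩, ha, isL_conjList ht⟩ <;>
          · intro χ hχ
            obtain ⟨b, hb, rfl⟩ := List.mem_map.1 hχ
            exact ht b hb
        · intro v; simp only [evalT_imp, evalT_and]; tauto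
      exact LDA.mp (LDA.mp T hIH) hcol

lemma box_from_conj (i : Agt) {χs : List (Frm Agt)} {ψ : Frm Agt}
    (hχ : ∀ χ ∈ χs, χ.isL) (hψ : ψ.isL)
    (h : LDA ((conjList χs).imp ψ)) :
    LDA ((conjList (χs.map (Frm.impbel i))).imp (Frm.impbel i ψ)) := by
  have hcl : (conjList χs).isL := isL_conjList hχ
  have hmapL : ∀ χ ∈ χs.map (Frm.impbel i), χ.isL := by
    intro χ hχ'
    obtain ⟨b, hb, rfl⟩ := List.mem_map.1 hχ'
    exact hχ b hb
  have n1 := LDA.nec i h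
  have k1 := LDA.axK i (φ := conjList χs) (ψ := ψ) hcl hψ
  have bcl := box_conj_list i hχ
  -- (P → Q) → (((Q ∧ W) → R) → (W → (P → R)))
  have T : LDA (((conjList (χs.map (Frm.impbel i))).imp (Frm.impbel i (conjList χs))).imp
      ((((Frm.impbel i (conjList χs)).and (Frm.impbel i ((conjList χs).imp ψ))).imp
          (Frm.impbel i ψ)).imp
        ((Frm.impbel i ((conjList χs).imp ψ)).imp
          ((conjList (χs.map (Frm.impbel i))).imp (Frm.impbel i ψ))))) := by
    apply LDA.taut
    · exact ⟨⟨isL_conjList hmapL, hcl⟩, ⟨⟨hcl, hcl, hψ⟩, hψ⟩, ⟨hcl, hψ⟩,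
        isL_conjList hmapL, hψ⟩
    · intro v; simp only [evalT_imp, evalT_and]; tauto
  exact LDA.mp (LDA.mp (LDA.mp T bcl) k1) n1

end LDAPaper

namespace LDAPaper

attribute [local instance] Classical.propDecidable

variable {Agt : Type}

/-! #### Consistency and maximal consistent sets -/

lemma imp_of_refuted {l χs : List (Frm Agt)} {ψ : Frm Agt}
    (hl : ∀ e ∈ l, e.isL) (hχ : ∀ e ∈ χs, e.isL) (hψ : ψ.isL)
    (hmem : ∀ e ∈ l, e ∈ χs ∨ e = Frm.neg ψ)
    (h : LDA (Frm.neg (conjList l))) : LDA ((conjList χs).imp ψ) := by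
  have T : LDA ((Frm.neg (conjList l)).imp ((conjList χs).imp ψ)) := by
    apply LDA.taut
    · exact ⟨isL_conjList hl, isL_conjList hχ, hψ⟩
    · intro v
      simp only [evalT_imp, evalT_neg, evalT_conj]
      intro h1 h2
      by_contra h3
      apply h1
      intro e he
      rcases hmem e he with hin | rfl
      · exact h2 e hin
      · rw [evalT_neg]; exact h3
  exact LDA.mp T h

lemma negimp_of_refuted {l χs : List (Frm Agt)} {ψ : Frm Agt}
    (hl : ∀ e ∈ l, e.isL) (hχ : ∀ e ∈ χs, e.isL) (hψ : ψ.isL)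
    (hmem : ∀ e ∈ l, e ∈ χs ∨ e = ψ)
    (h : LDA (Frm.neg (conjList l))) : LDA ((conjList χs).imp (Frm.neg ψ)) := by
  have T : LDA ((Frm.neg (conjList l)).imp ((conjList χs).imp (Frm.neg ψ))) := by
    apply LDA.taut
    · exact ⟨isL_conjList hl, isL_conjList hχ, hψ⟩
    · intro v
      simp only [evalT_imp, evalT_neg, evalT_conj]
      intro h1 h2 h3
      apply h1
      intro e he
      rcases hmem e he with hin | rfl
      · exact h2 e hin
      · exact h3
  exact LDA.mp T h

lemma MCS.isL {Γ : Set (Frm Agt)} (hΓ : MCS Γ) {ψ : Frm Agt} (h : ψ ∈ Γ) : ψ.isL :=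
  hΓ.1 ψ h

lemma MCS.closure {Γ : Set (Frm Agt)} (hΓ : MCS Γ) {l : List (Frm Agt)}
    (hl : ∀ e ∈ l, e ∈ Γ) {ψ : Frm Agt} (hψ : ψ.isL)
    (h : LDA ((conjList l).imp ψ)) : ψ ∈ Γ := by
  have hlL : ∀ e ∈ l, e.isL := fun e he => hΓ.isL (hl e he)
  have hcons : Consistent (insert ψ Γ) := by
    intro m hm hder
    set f := m.filter (fun e => e ≠ ψ) with hf
    have hfΓ : ∀ e ∈ f, e ∈ Γ := by
      intro e he
      rw [hf, List.mem_filter] at he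
      have := hm e he.1
      rcases this with rfl | hin
      · simp at he
      · exact hin
    have hmL : ∀ e ∈ m, e.isL := by
      intro e he
      rcases hm e he with rfl | hin
      exacts [hψ, hΓ.isL hin]
    have hfL : ∀ e ∈ f, e.isL := fun e he => hΓ.isL (hfΓ e he)
    have key : LDA (Frm.neg (conjList (l ++ f))) := by
      have T : LDA (((conjList l).imp ψ).imp
          ((Frm.neg (conjList m)).imp (Frm.neg (conjList (l ++ f))))) := by
        apply LDA.taut
        · refine ⟨⟨isL_conjList hlL, hψ⟩, isL_conjList hmL, isL_conjList ?_⟩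
          intro e he
          rcases List.mem_append.1 he with h1 | h1
          exacts [hlL e h1, hfL e h1]
        · intro v
          simp only [evalT_imp, evalT_neg, evalT_conj]
          intro h1 h2 h3
          apply h2
          intro e he
          by_cases hc : e = ψ
          · subst hc
            exact h1 fun e' he' => h3 e' (List.mem_append.2 (Or.inl he'))
          · refine h3 e (List.mem_append.2 (Or.inr ?_))
            rw [hf, List.mem_filter]
            exact ⟨he, by simp [hc]⟩
      exact LDA.mp (LDA.mp T h) hder
    refine hΓ.2.1 (l ++ f) ?_ key
    intro e he
    rcases List.mem_append.1 he with h1 | h1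
    exacts [hl e h1, hfΓ e h1]
  have heq : insert ψ Γ = Γ := by
    refine hΓ.2.2 _ ?_ hcons (Set.subset_insert _ _)
    intro e he
    rcases he with rfl | hin
    exacts [hψ, hΓ.isL hin]
  exact heq ▸ Set.mem_insert _ _

lemma MCS.mem_of_thm {Γ : Set (Frm Agt)} (hΓ : MCS Γ) {ψ : Frm Agt}
    (hψ : ψ.isL) (h : LDA ψ) : ψ ∈ Γ := by
  refine hΓ.closure (l := []) (by simp) hψ ?_
  have T : LDA (ψ.imp ((conjList []).imp ψ)) := by
    apply LDA.taut
    · exact ⟨hψ, isL_conjList (by simp), hψ⟩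
    · intro v; simp only [evalT_imp]; tauto
  exact LDA.mp T h

lemma MCS.not_both {Γ : Set (Frm Agt)} (hΓ : MCS Γ) {ψ : Frm Agt}
    (h1 : ψ ∈ Γ) (h2 : Frm.neg ψ ∈ Γ) : False := by
  have hψ : ψ.isL := hΓ.isL h1
  refine hΓ.2.1 [ψ, Frm.neg ψ] ?_ ?_
  · intro e he
    simp only [List.mem_cons, List.not_mem_nil, or_false] at he
    rcases he with rfl | rfl
    exacts [h1, h2]
  · apply LDA.taut
    · refine isL_conjList ?_
      intro e he
      simp only [List.mem_cons, List.not_mem_nil, or_false] at he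
      rcases he with rfl | rfl
      exacts [hψ, hψ]
    · intro v
      simp only [evalT_neg, evalT_conj]
      intro h
      have ha := h ψ (by simp)
      have hb := h (Frm.neg ψ) (by simp)
      rw [evalT_neg] at hb
      exact hb ha

lemma MCS.neg_mem_of_not_mem {Γ : Set (Frm Agt)} (hΓ : MCS Γ) {ψ : Frm Agt}
    (hψ : ψ.isL) (h : ψ ∉ Γ) : Frm.neg ψ ∈ Γ := by
  have hnc : ¬ Consistent (insert ψ Γ) := by
    intro hc
    exact h (by
      have heq := hΓ.2.2 _ (by
        intro e he; rcases he with rfl | hin; exacts [hψ, hΓ.isL hin]) hc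
        (Set.subset_insert _ _)
      exact heq ▸ Set.mem_insert _ _)
  simp only [Consistent, not_forall, not_not] at hnc
  obtain ⟨m, hm, hder⟩ := hnc
  set f := m.filter (fun e => e ≠ ψ) with hf
  have hfΓ : ∀ e ∈ f, e ∈ Γ := by
    intro e he
    rw [hf, List.mem_filter] at he
    rcases hm e he.1 with rfl | hin
    · simp at he
    · exact hin
  have hmL : ∀ e ∈ m, e.isL := by
    intro e he; rcases hm e he with rfl | hin; exacts [hψ, hΓ.isL hin]
  have himp := negimp_of_refuted (l := m) (χs := f) hmL
    (fun e he => hΓ.isL (hfΓ e he)) hψ ?_ hder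
  · exact hΓ.closure hfΓ (by simpa using hψ) himp
  · intro e he
    by_cases hc : e = ψ
    · exact Or.inr hc
    · exact Or.inl (by rw [hf, List.mem_filter]; exact ⟨he, by simp [hc]⟩)

lemma MCS.neg_mem_iff {Γ : Set (Frm Agt)} (hΓ : MCS Γ) {ψ : Frm Agt} (hψ : ψ.isL) :
    Frm.neg ψ ∈ Γ ↔ ψ ∉ Γ := by
  constructor
  · intro h1 h2; exact hΓ.not_both h2 h1
  · exact hΓ.neg_mem_of_not_mem hψ

lemma MCS.and_mem_iff {Γ : Set (Frm Agt)} (hΓ : MCS Γ) {A B : Frm Agt}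
    (hA : A.isL) (hB : B.isL) :
    Frm.and A B ∈ Γ ↔ (A ∈ Γ ∧ B ∈ Γ) := by
  constructor
  · intro h
    constructor
    · refine hΓ.closure (l := [A.and B]) (by simpa using h) hA ?_
      apply LDA.taut
      · exact ⟨isL_conjList (by simp [hA, hB]), hA⟩
      · intro v
        simp only [evalT_imp, evalT_conj]
        intro h1
        have := h1 (A.and B) (by simp)
        rw [evalT_and] at this
        exact this.1
    · refine hΓ.closure (l := [A.and B]) (by simpa using h) hB ?_
      apply LDA.taut
      · exact ⟨isL_conjList (by simp [hA, hB]), hB⟩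
      · intro v
        simp only [evalT_imp, evalT_conj]
        intro h1
        have := h1 (A.and B) (by simp)
        rw [evalT_and] at this
        exact this.2
  · rintro ⟨h1, h2⟩
    refine hΓ.closure (l := [A, B]) ?_ (by exact ⟨hA, hB⟩) ?_
    · intro e he
      simp only [List.mem_cons, List.not_mem_nil, or_false] at he
      rcases he with rfl | rfl
      exacts [h1, h2]
    · apply LDA.taut
      · refine ⟨isL_conjList ?_, hA, hB⟩
        intro e he
        simp only [List.mem_cons, List.not_mem_nil, or_false] at he
        rcases he with rfl | rfl
        exacts [hA, hB]
      · intro v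
        simp only [evalT_imp, evalT_conj, evalT_and]
        intro h1
        exact ⟨h1 A (by simp), h1 B (by simp)⟩

/-- Lindenbaum's lemma. -/
lemma lindenbaum {Δ : Set (Frm Agt)} (hL : ∀ ψ ∈ Δ, ψ.isL) (hc : Consistent Δ) :
    ∃ Γ, MCS Γ ∧ Δ ⊆ Γ := by
  set S : Set (Set (Frm Agt)) := {Θ | (∀ ψ ∈ Θ, ψ.isL) ∧ Consistent Θ} with hS
  have hub : ∀ c ⊆ S, IsChain (· ⊆ ·) c → ∀ Θ ∈ c, ∃ ub ∈ S, ∀ s ∈ c, s ⊆ ub := by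
    intro c hcS hchain Θ hΘ
    refine ⟨⋃₀ c, ⟨?_, ?_⟩, fun s hs => Set.subset_sUnion_of_mem hs⟩
    · rintro ψ ⟨t, ht, hψ⟩
      exact (hcS ht).1 ψ hψ
    · intro l hl
      have key : ∀ l' : List (Frm Agt), (∀ e ∈ l', e ∈ ⋃₀ c) →
          ∃ t ∈ c, ∀ e ∈ l', e ∈ t := by
        intro l'
        induction l' with
        | nil => exact fun _ => ⟨Θ, hΘ, by simp⟩
        | cons a m ih =>
            intro hl
            obtain ⟨t, htc, htm⟩ := ih fun e he => hl e (by simp [he])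
            obtain ⟨t', ht'c, hat'⟩ := hl a (by simp)
            rcases hchain.total htc ht'c with hsub | hsub
            · exact ⟨t', ht'c, by
                intro e he
                rcases List.mem_cons.1 he with rfl | he'
                exacts [hat', hsub (htm e he')]⟩
            · exact ⟨t, htc, by
                intro e he
                rcases List.mem_cons.1 he with rfl | he'
                exacts [hsub hat', htm e he']⟩
      obtain ⟨t, htc, htm⟩ := key l hl
      exact (hcS htc).2 l htm
  obtain ⟨m, hsub, hmax⟩ := zorn_subset_nonempty S
    (by
      intro c hcS hchain hcne
      obtain ⟨Θ, hΘ⟩ := hcne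
      exact hub c hcS hchain Θ hΘ) Δ ⟨hL, hc⟩
  obtain ⟨hmS, hmmax⟩ := hmax
  refine ⟨m, ⟨hmS.1, hmS.2, ?_⟩, hsub⟩
  intro Δ' hΔ'L hΔ'c hsub'
  exact Set.Subset.antisymm (hmmax (y := Δ') ⟨hΔ'L, hΔ'c⟩ hsub') hsub'

end LDAPaper

namespace LDAPaper

attribute [local instance] Classical.propDecidable

variable {Agt : Type}

/-! #### Soundness -/

lemma sat_neg (M : PreNDM Agt) (w : M.W) (φ : Frm Agt) :
    M.sat w (Frm.neg φ) ↔ ¬ M.sat w φ := Iff.rfl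

lemma sat_and (M : PreNDM Agt) (w : M.W) (φ ψ : Frm Agt) :
    M.sat w (Frm.and φ ψ) ↔ (M.sat w φ ∧ M.sat w ψ) := Iff.rfl

lemma sat_imp (M : PreNDM Agt) (w : M.W) (φ ψ : Frm Agt) :
    M.sat w (φ.imp ψ) ↔ (M.sat w φ → M.sat w ψ) := by
  simp only [Frm.imp, sat_neg, sat_and]
  tauto

lemma boolEval_sat (M : PreNDM Agt) (w : M.W) :
    ∀ φ : Frm Agt, boolEval (fun ψ => decide (M.sat w ψ)) φ = true ↔ M.sat w φ := by
  intro φ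
  induction φ with
  | atom p => simp [boolEval, PreNDM.sat]; exact ⟨of_decide_eq_true, decide_eq_true⟩
  | neg φ ih => rw [boolEval_neg, Bool.not_eq_true', ← Bool.not_eq_true, ih]; exact Iff.rfl
  | and φ ψ ih1 ih2 => rw [boolEval_and, Bool.and_eq_true, ih1, ih2]; exact Iff.rfl
  | expbel i α _ => simp [boolEval, PreNDM.sat]; exact ⟨of_decide_eq_true, decide_eq_true⟩
  | impbel i φ _ => simp [boolEval, PreNDM.sat]; exact ⟨of_decide_eq_true, decide_eq_true⟩

lemma lda_sound {φ : Frm Agt} (h : LDA φ) :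
    ∀ M : PreNDM Agt, isNDM M → ∀ w : M.W, M.sat w φ := by
  induction h with
  | taut hL ht =>
      intro M _ w
      have := ht (fun ψ => decide (M.sat w ψ))
      rwa [boolEval_sat] at this
  | axK i hφ hψ =>
      intro M _ w
      rw [sat_imp, sat_and]
      rintro ⟨h1, h2⟩ v hv
      exact (sat_imp M v _ _).1 (h2 v hv) (h1 v hv)
  | axD i hφ =>
      intro M hM w
      rw [sat_neg, sat_and]
      rintro ⟨h1, h2⟩
      obtain ⟨v, hv⟩ := hM.2.2 i w
      exact (h2 v hv) (h1 v hv)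
  | axInt i hα =>
      intro M hM w
      rw [sat_imp]
      intro h1 v hv
      rw [hM.2.1 i w] at hv
      exact hv _ h1
  | mp h1 h2 ih1 ih2 =>
      intro M hM w
      exact (sat_imp M w _ _).1 (ih1 M hM w) (ih2 M hM w)
  | nec i h ih =>
      intro M hM w v _
      exact ih M hM v

/-! #### The canonical model -/

lemma consistent_proj {Γ : Set (Frm Agt)} (hΓ : MCS Γ) (i : Agt) :
    Consistent {χ : Frm Agt | Frm.impbel i χ ∈ Γ} := by
  intro l hl hder
  have hLl : ∀ χ ∈ l, χ.isL := fun χ hχ =>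
    (hΓ.isL (show Frm.impbel i χ ∈ Γ from hl χ hχ) : (Frm.impbel i χ).isL)
  have h2 : Frm.impbel i (conjList l) ∈ Γ := by
    refine hΓ.closure (l := l.map (Frm.impbel i)) ?_
      (by simpa using isL_conjList hLl) (box_conj_list i hLl)
    intro e he
    obtain ⟨χ, hχ, rfl⟩ := List.mem_map.1 he
    exact hl χ hχ
  have h3 : Frm.impbel i (Frm.neg (conjList l)) ∈ Γ :=
    hΓ.mem_of_thm (by simpa using isL_conjList hLl) (LDA.nec i hder)
  have hand : (Frm.impbel i (conjList l)).and (Frm.impbel i (Frm.neg (conjList l))) ∈ Γ :=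
    (hΓ.and_mem_iff (by simpa using isL_conjList hLl)
      (by simpa using isL_conjList hLl)).2 ⟨h2, h3⟩
  exact hΓ.not_both hand
    (hΓ.mem_of_thm (show (conjList l).isL ∧ (conjList l).isL from
        ⟨isL_conjList hLl, isL_conjList hLl⟩)
      (LDA.axD i (isL_conjList hLl)))

lemma consistent_proj_neg {Γ : Set (Frm Agt)} (hΓ : MCS Γ) (i : Agt) {ψ : Frm Agt}
    (hψ : ψ.isL) (hnot : Frm.impbel i ψ ∉ Γ) :
    Consistent ({χ : Frm Agt | Frm.impbel i χ ∈ Γ} ∪ {Frm.neg ψ}) := by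
  intro l hl hder
  set χs := l.filter (fun e => e ≠ Frm.neg ψ) with hχs
  have hχmem : ∀ e ∈ χs, Frm.impbel i e ∈ Γ := by
    intro e he
    rw [hχs, List.mem_filter] at he
    rcases hl e he.1 with hin | hin
    · exact (hin : Frm.impbel i e ∈ Γ)
    · simp only [Set.mem_singleton_iff] at hin
      exfalso
      have := he.2
      simp [hin] at this
  have hχL : ∀ e ∈ χs, e.isL := fun e he =>
    (hΓ.isL (hχmem e he) : (Frm.impbel i e).isL)
  have hlL : ∀ e ∈ l, e.isL := by
    intro e he
    rcases hl e he with hin | hin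
    · exact (hΓ.isL (show Frm.impbel i e ∈ Γ from hin) : (Frm.impbel i e).isL)
    · simp only [Set.mem_singleton_iff] at hin
      subst hin
      simpa using hψ
  have himp : LDA ((conjList χs).imp ψ) := by
    refine imp_of_refuted hlL hχL hψ ?_ hder
    intro e he
    by_cases hc : e = Frm.neg ψ
    · exact Or.inr hc
    · exact Or.inl (by rw [hχs, List.mem_filter]; exact ⟨he, by simp [hc]⟩)
  have hbox := box_from_conj i hχL hψ himp
  have : Frm.impbel i ψ ∈ Γ := by
    refine hΓ.closure (l := χs.map (Frm.impbel i)) ?_ (by simpa using hψ) hbox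
    intro e he
    obtain ⟨χ, hχ, rfl⟩ := List.mem_map.1 he
    exact hχmem χ hχ
  exact hnot this

lemma truth_lemma : ∀ {ψ : Frm Agt}, ψ.isL →
    ∀ w : {Γ : Set (Frm Agt) // MCS Γ}, ((canonM Agt).sat w ψ ↔ ψ ∈ w.val) := by
  intro ψ
  induction ψ with
  | atom p =>
      intro _ w
      simp [canonM, PreNDM.sat, canonV]; exact Iff.rfl
  | neg ψ ih =>
      intro hL w
      have : (canonM Agt).sat w (Frm.neg ψ) ↔ ¬ (canonM Agt).sat w ψ := Iff.rfl
      rw [this, ih hL w]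
      exact (w.2.neg_mem_iff (ψ := ψ) hL).symm
  | and φ' ψ' ih1 ih2 =>
      intro hL w
      have : (canonM Agt).sat w (Frm.and φ' ψ') ↔
          ((canonM Agt).sat w φ' ∧ (canonM Agt).sat w ψ') := Iff.rfl
      rw [this, ih1 hL.1 w, ih2 hL.2 w, ← w.2.and_mem_iff hL.1 hL.2]
  | expbel i α _ =>
      intro _ w
      simp [canonM, PreNDM.sat, canonD]
  | impbel i ψ ih =>
      intro hL w
      have hLψ : ψ.isL := hL
      have hsat : (canonM Agt).sat w (Frm.impbel i ψ) ↔
          ∀ v ∈ canonN i w, (canonM Agt).sat v ψ := Iff.rfl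
      rw [hsat]
      constructor
      · intro h
        by_contra hnot
        have hcons := consistent_proj_neg (ψ := ψ) w.2 i hLψ hnot
        have hLset : ∀ χ ∈ ({χ : Frm Agt | Frm.impbel i χ ∈ w.val}
            ∪ {Frm.neg ψ} : Set (Frm Agt)), χ.isL := by
          intro χ hχ
          rcases hχ with hin | hin
          · exact (w.2.isL (show Frm.impbel i χ ∈ w.val from hin) :
              (Frm.impbel i χ).isL)
          · simp only [Set.mem_singleton_iff] at hin
            subst hin
            exact (hLψ : (Frm.neg ψ).isL)
        obtain ⟨Δ, hΔ, hsub⟩ := lindenbaum hLset hcons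
        have hmemN : (⟨Δ, hΔ⟩ : {Γ : Set (Frm Agt) // MCS Γ}) ∈ canonN i w := by
          intro χ hχ
          exact hsub (Or.inl hχ)
        have hψΔ : ψ ∈ Δ := (ih hLψ ⟨Δ, hΔ⟩).1 (h _ hmemN)
        exact hΔ.not_both hψΔ (hsub (Or.inr rfl))
      · intro h v hv
        exact (ih hLψ v).2 (hv ψ h)

lemma canonM_qndm : isQNDM (canonM Agt) := by
  refine ⟨?_, ?_, ?_⟩
  · intro i w α hα
    exact (w.2.isL hα : (Frm.expbel i α).isL)
  · intro i w v hv α hα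
    have hαL0 : α.isL0 := (w.2.isL hα : (Frm.expbel i α).isL)
    have hαL : α.isL := isL0_isL α hαL0
    have hbox : Frm.impbel i α ∈ w.val := by
      refine w.2.closure (l := [Frm.expbel i α]) (by have h' : Frm.expbel i α ∈ w.val := hα; simpa using h')
        (by simpa using hαL) ?_
      have hInt := LDA.axInt i hαL0
      have T : LDA (((Frm.expbel i α).imp (Frm.impbel i α)).imp
          ((conjList [Frm.expbel i α]).imp (Frm.impbel i α))) := by
        apply LDA.taut
        · refine ⟨⟨hαL0, hαL⟩, isL_conjList ?_, hαL⟩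
          intro e he
          simp only [List.mem_cons, List.not_mem_nil, or_false] at he
          subst he
          simpa using hαL0
        · intro v'
          simp only [evalT_imp, evalT_conj]
          intro h1 h2
          exact h1 (h2 _ (by simp))
      exact LDA.mp T hInt
    exact (truth_lemma hαL v).2 (hv α hbox)
  · intro i w
    obtain ⟨Δ, hΔ, hsub⟩ := lindenbaum
      (Δ := {χ : Frm Agt | Frm.impbel i χ ∈ w.val})
      (fun χ hχ => (w.2.isL hχ : (Frm.impbel i χ).isL)) (consistent_proj w.2 i)
    exact ⟨⟨Δ, hΔ⟩, fun χ hχ => hsub hχ⟩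

lemma consistent_singleton_neg {φ : Frm Agt} (hφ : φ.isL) (h : ¬ LDA φ) :
    Consistent ({Frm.neg φ} : Set (Frm Agt)) := by
  intro l hl hder
  have hlL : ∀ e ∈ l, e.isL := by
    intro e he
    have := hl e he
    simp only [Set.mem_singleton_iff] at this
    subst this
    exact (hφ : (Frm.neg φ).isL)
  have T : LDA ((Frm.neg (conjList l)).imp φ) := by
    apply LDA.taut
    · exact ⟨isL_conjList hlL, hφ⟩
    · intro v
      simp only [evalT_imp, evalT_neg, evalT_conj]
      intro h1
      by_contra h2
      apply h1
      intro e he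
      have := hl e he
      simp only [Set.mem_singleton_iff] at this
      subst this
      rw [evalT_neg]
      exact h2
  exact h (LDA.mp T hder)

end LDAPaper

namespace LDAPaper

attribute [local instance] Classical.propDecidable

variable {Agt : Type}

/-! #### Subformulas -/

def subf : Frm Agt → List (Frm Agt)
  | .atom p => [.atom p]
  | .neg φ => .neg φ :: subf φ
  | .and φ ψ => .and φ ψ :: (subf φ ++ subf ψ)
  | .expbel i α => .expbel i α :: subf α
  | .impbel i φ => .impbel i φ :: subf φ

lemma self_mem_subf (φ : Frm Agt) : φ ∈ subf φ := by
  cases φ <;> simp [subf]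

lemma subf_trans : ∀ {θ χ ψ : Frm Agt}, ψ ∈ subf χ → χ ∈ subf θ → ψ ∈ subf θ := by
  intro θ
  induction θ with
  | atom p =>
      intro χ ψ h1 h2
      simp only [subf, List.mem_singleton] at h2
      subst h2
      exact h1
  | neg θ ih =>
      intro χ ψ h1 h2
      simp only [subf, List.mem_cons] at h2 ⊢
      rcases h2 with rfl | h2
      · simpa [subf] using h1
      · exact Or.inr (ih h1 h2)
  | and θ1 θ2 ih1 ih2 =>
      intro χ ψ h1 h2
      simp only [subf, List.mem_cons, List.mem_append] at h2 ⊢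
      rcases h2 with rfl | h2 | h2
      · simpa [subf] using h1
      · exact Or.inr (Or.inl (ih1 h1 h2))
      · exact Or.inr (Or.inr (ih2 h1 h2))
  | expbel i θ ih =>
      intro χ ψ h1 h2
      simp only [subf, List.mem_cons] at h2 ⊢
      rcases h2 with rfl | h2
      · simpa [subf] using h1
      · exact Or.inr (ih h1 h2)
  | impbel i θ ih =>
      intro χ ψ h1 h2
      simp only [subf, List.mem_cons] at h2 ⊢
      rcases h2 with rfl | h2
      · simpa [subf] using h1
      · exact Or.inr (ih h1 h2)

lemma subf_neg {φ ψ : Frm Agt} (h : Frm.neg ψ ∈ subf φ) : ψ ∈ subf φ :=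
  subf_trans (by simp [subf, self_mem_subf]) h

lemma subf_and_left {φ ψ1 ψ2 : Frm Agt} (h : Frm.and ψ1 ψ2 ∈ subf φ) : ψ1 ∈ subf φ :=
  subf_trans (by simp [subf, self_mem_subf]) h

lemma subf_and_right {φ ψ1 ψ2 : Frm Agt} (h : Frm.and ψ1 ψ2 ∈ subf φ) : ψ2 ∈ subf φ :=
  subf_trans (by simp [subf, self_mem_subf]) h

lemma subf_expbel {φ ψ : Frm Agt} {i : Agt} (h : Frm.expbel i ψ ∈ subf φ) : ψ ∈ subf φ :=
  subf_trans (by simp [subf, self_mem_subf]) h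

lemma subf_impbel {φ ψ : Frm Agt} {i : Agt} (h : Frm.impbel i ψ ∈ subf φ) : ψ ∈ subf φ :=
  subf_trans (by simp [subf, self_mem_subf]) h

lemma isL_subf : ∀ {φ ψ : Frm Agt}, ψ ∈ subf φ → φ.isL → ψ.isL := by
  have hL0 : ∀ {α ψ : Frm Agt}, ψ ∈ subf α → α.isL0 → ψ.isL0 := by
    intro α
    induction α with
    | atom p => intro ψ h _; simp only [subf, List.mem_singleton] at h; subst h; trivial
    | neg α ih =>
        intro ψ h hα
        simp only [subf, List.mem_cons] at h
        rcases h with rfl | h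
        exacts [hα, ih h hα]
    | and α β ih1 ih2 =>
        intro ψ h hα
        simp only [subf, List.mem_cons, List.mem_append] at h
        rcases h with rfl | h | h
        exacts [hα, ih1 h hα.1, ih2 h hα.2]
    | expbel i α ih =>
        intro ψ h hα
        simp only [subf, List.mem_cons] at h
        rcases h with rfl | h
        exacts [hα, ih h hα]
    | impbel i α ih => intro ψ h hα; exact absurd hα id
  intro φ
  induction φ with
  | atom p => intro ψ h _; simp only [subf, List.mem_singleton] at h; subst h; trivial
  | neg φ ih =>
      intro ψ h hφ
      simp only [subf, List.mem_cons] at h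
      rcases h with rfl | h
      exacts [hφ, ih h hφ]
  | and φ1 φ2 ih1 ih2 =>
      intro ψ h hφ
      simp only [subf, List.mem_cons, List.mem_append] at h
      rcases h with rfl | h | h
      exacts [hφ, ih1 h hφ.1, ih2 h hφ.2]
  | expbel i α ih =>
      intro ψ h hφ
      simp only [subf, List.mem_cons] at h
      rcases h with rfl | h
      · exact hφ
      · exact isL0_isL ψ (hL0 h hφ)
  | impbel i φ ih =>
      intro ψ h hφ
      simp only [subf, List.mem_cons] at h
      rcases h with rfl | h
      exacts [hφ, ih h hφ]

lemma atoms_subf : ∀ {φ ψ : Frm Agt}, ψ ∈ subf φ → ψ.atomsOf ⊆ φ.atomsOf := by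
  intro φ
  induction φ with
  | atom p => intro ψ h; simp only [subf, List.mem_singleton] at h; subst h; exact subset_rfl
  | neg φ ih =>
      intro ψ h
      simp only [subf, List.mem_cons] at h
      rcases h with rfl | h
      · exact subset_rfl
      · exact ih h
  | and φ1 φ2 ih1 ih2 =>
      intro ψ h
      simp only [subf, List.mem_cons, List.mem_append] at h
      rcases h with rfl | h | h
      · exact subset_rfl
      · exact (ih1 h).trans Set.subset_union_left
      · exact (ih2 h).trans Set.subset_union_right
  | expbel i α ih =>
      intro ψ h
      simp only [subf, List.mem_cons] at h
      rcases h with rfl | h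
      · exact subset_rfl
      · exact ih h
  | impbel i φ ih =>
      intro ψ h
      simp only [subf, List.mem_cons] at h
      rcases h with rfl | h
      · exact subset_rfl
      · exact ih h

lemma atomsOf_finite (φ : Frm Agt) : φ.atomsOf.Finite := by
  induction φ with
  | atom p => exact Set.finite_singleton p
  | neg φ ih => exact ih
  | and φ ψ ih1 ih2 => exact ih1.union ih2
  | expbel i α ih => exact ih
  | impbel i φ ih => exact ih

/-! #### Disjunctions -/

def bigOr (l : List (Frm Agt)) : Frm Agt := Frm.neg (conjList (l.map Frm.neg))

lemma sat_conjList (M : PreNDM Agt) (w : M.W) (l : List (Frm Agt)) :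
    M.sat w (conjList l) ↔ ∀ e ∈ l, M.sat w e := by
  induction l with
  | nil =>
      simp only [conjList, List.not_mem_nil, sat_neg, sat_and]
      tauto
  | cons a t ih =>
      simp only [conjList, sat_and, ih, List.mem_cons]
      constructor
      · rintro ⟨h1, h2⟩ e (rfl | he); exacts [h1, h2 e he]
      · intro h; exact ⟨h a (Or.inl rfl), fun e he => h e (Or.inr he)⟩

lemma sat_bigOr (M : PreNDM Agt) (w : M.W) (l : List (Frm Agt)) :
    M.sat w (bigOr l) ↔ ∃ β ∈ l, M.sat w β := by
  simp only [bigOr, sat_neg, sat_conjList]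
  constructor
  · intro h
    by_contra hc
    push_neg at hc
    exact h fun e he => by
      obtain ⟨β, hβ, rfl⟩ := List.mem_map.1 he
      exact (sat_neg M w β).2 (hc β hβ)
  · rintro ⟨β, hβ, hs⟩ h
    exact (h (Frm.neg β) (List.mem_map.2 ⟨β, hβ, rfl⟩)) hs

lemma isL0_conjList {l : List (Frm Agt)} (h : ∀ ψ ∈ l, ψ.isL0) : (conjList l).isL0 := by
  induction l with
  | nil => exact ⟨trivial, trivial⟩
  | cons a t ih =>
      exact ⟨h a (by simp), ih fun ψ hψ => h ψ (by simp [hψ])⟩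

lemma isL0_bigOr {l : List (Frm Agt)} (h : ∀ ψ ∈ l, ψ.isL0) : (bigOr l).isL0 := by
  refine isL0_conjList ?_
  intro ψ hψ
  obtain ⟨β, hβ, rfl⟩ := List.mem_map.1 hψ
  exact h β hβ

lemma atoms_mem_conjList {l : List (Frm Agt)} {e : Frm Agt} (h : e ∈ l) :
    e.atomsOf ⊆ (conjList l).atomsOf := by
  induction l with
  | nil => simp at h
  | cons a t ih =>
      rcases List.mem_cons.1 h with rfl | h'
      · exact (Set.subset_union_left : e.atomsOf ⊆ e.atomsOf ∪ (conjList t).atomsOf)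
      · exact (ih h').trans
          (Set.subset_union_right : (conjList t).atomsOf ⊆ a.atomsOf ∪ (conjList t).atomsOf)

lemma atoms_mem_bigOr {l : List (Frm Agt)} {e : Frm Agt} (h : e ∈ l) :
    e.atomsOf ⊆ (bigOr l).atomsOf := by
  have : (Frm.neg e).atomsOf ⊆ (conjList (l.map Frm.neg)).atomsOf :=
    atoms_mem_conjList (List.mem_map.2 ⟨e, h, rfl⟩)
  exact this

end LDAPaper

namespace LDAPaper

attribute [local instance] Classical.propDecidable

variable {Agt : Type}

/-! #### The filtered finite model and its NDM transform -/

/-- The subformula closure of `φ` as a set. -/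
def Sphi (φ : Frm Agt) : Set (Frm Agt) := {ψ | ψ ∈ subf φ}

/-- Worlds of the filtration. -/
abbrev FW (M : PreNDM Agt) (S : Set (Frm Agt)) := Quotient (filtSetoid M S)

/-- Smallest filtration of the notional function. -/
def filtN' (M : PreNDM Agt) (S : Set (Frm Agt)) (i : Agt) (x : FW M S) :
    Set (FW M S) :=
  {y | ∃ w v : M.W, filtMk M S w = x ∧ filtMk M S v = y ∧ v ∈ M.N i w}

/-- `L0`-formula naming exactly the set `N_Σ(i,x)` via fresh atoms. -/
noncomputable def charForm (M : PreNDM Agt) (S : Set (Frm Agt))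
    [Fintype (FW M S)] (ι : FW M S → ℕ) (i : Agt) (x : FW M S) : Frm Agt :=
  bigOr (((Finset.univ.filter (fun y => y ∈ filtN' M S i x)).toList).map
    (fun y => Frm.atom (ι y)))

noncomputable def filtD (M : PreNDM Agt) (S : Set (Frm Agt))
    [Fintype (FW M S)] (ι : FW M S → ℕ) (i : Agt) (x : FW M S) : Set (Frm Agt) :=
  {α | Frm.expbel i α ∈ S ∧ ∃ w, filtMk M S w = x ∧ α ∈ M.D i w} ∪ {charForm M S ι i x}

def filtV (M : PreNDM Agt) (S : Set (Frm Agt)) (A : Set ℕ) (ι : FW M S → ℕ)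
    (p : ℕ) : Set (FW M S) :=
  {x | p ∈ A ∧ ∃ w, filtMk M S w = x ∧ M.sat w (Frm.atom p)} ∪ {x | ι x = p}

noncomputable def filtModel' (M : PreNDM Agt) (S : Set (Frm Agt))
    [Fintype (FW M S)] (A : Set ℕ) (ι : FW M S → ℕ) : PreNDM Agt where
  W := FW M S
  D := filtD M S ι
  N := filtN' M S
  V := filtV M S A ι

lemma charForm_atom_mem (M : PreNDM Agt) (S : Set (Frm Agt))
    [Fintype (FW M S)] (ι : FW M S → ℕ) (i : Agt) {x y : FW M S}
    (hy : y ∈ filtN' M S i x) : ι y ∈ (charForm M S ι i x).atomsOf := by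
  have h1 : y ∈ (Finset.univ.filter (fun y => y ∈ filtN' M S i x)).toList :=
    Finset.mem_toList.2 (Finset.mem_filter.2 ⟨Finset.mem_univ _, hy⟩)
  have h2 : (Frm.atom (ι y) : Frm Agt) ∈ ((Finset.univ.filter
      (fun y => y ∈ filtN' M S i x)).toList).map (fun z => (Frm.atom (ι z) : Frm Agt)) :=
    List.mem_map.2 ⟨y, h1, rfl⟩
  exact atoms_mem_bigOr h2 rfl

/-- The filtration truth lemma. -/
lemma filt_truth (M : PreNDM Agt) (φ : Frm Agt) (hQ : isQNDM M)
    [Fintype (FW M (Sphi φ))] (ι : FW M (Sphi φ) → ℕ)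
    (hfresh : ∀ x, ι x ∉ φ.atomsOf) :
    ∀ ψ : Frm Agt, ψ ∈ subf φ → ∀ w : M.W,
      ((filtModel' M (Sphi φ) φ.atomsOf ι).sat (filtMk M (Sphi φ) w) ψ ↔ M.sat w ψ) := by
  intro ψ
  induction ψ with
  | atom p =>
      intro hmem w
      have hpA : p ∈ φ.atomsOf := atoms_subf hmem rfl
      show filtMk M (Sphi φ) w ∈ filtV M (Sphi φ) φ.atomsOf ι p ↔ M.sat w (Frm.atom p)
      constructor
      · rintro (⟨_, w', hw', hs⟩ | hfr)
        · exact ((Quotient.exact hw' : filtRel M (Sphi φ) w' w) (Frm.atom p) hmem).1 hs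
        · exact absurd (hfr ▸ hpA) (hfresh _)
      · intro hs
        exact Or.inl ⟨hpA, w, rfl, hs⟩
  | neg ψ ih =>
      intro hmem w
      have hm' : ψ ∈ subf φ := subf_neg hmem
      show ¬ _ ↔ ¬ _
      rw [ih hm' w]
  | and ψ1 ψ2 ih1 ih2 =>
      intro hmem w
      show _ ∧ _ ↔ _ ∧ _
      rw [ih1 (subf_and_left hmem) w, ih2 (subf_and_right hmem) w]
  | expbel i α ih =>
      intro hmem w
      have hmα : α ∈ subf φ := subf_expbel hmem
      show α ∈ filtD M (Sphi φ) ι i (filtMk M (Sphi φ) w) ↔ α ∈ M.D i w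
      constructor
      · rintro (⟨_, w', hw', hD⟩ | hch)
        · exact (show α ∈ M.D i w' ↔ α ∈ M.D i w from
            (Quotient.exact hw' : filtRel M (Sphi φ) w' w) (Frm.expbel i α) hmem).1 hD
        · exfalso
          simp only [Set.mem_singleton_iff] at hch
          obtain ⟨v, hv⟩ := hQ.2.2 i w
          have hyN : filtMk M (Sphi φ) v ∈ filtN' M (Sphi φ) i (filtMk M (Sphi φ) w) :=
            ⟨w, v, rfl, rfl, hv⟩
          have hatom := charForm_atom_mem M (Sphi φ) ι i hyN
          rw [← hch] at hatom
          exact hfresh _ (atoms_subf hmα hatom)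
      · intro hD
        exact Or.inl ⟨hmem, w, rfl, hD⟩
  | impbel i ψ ih =>
      intro hmem w
      have hmψ : ψ ∈ subf φ := subf_impbel hmem
      show (∀ y ∈ filtN' M (Sphi φ) i (filtMk M (Sphi φ) w),
          (filtModel' M (Sphi φ) φ.atomsOf ι).sat y ψ) ↔ ∀ v ∈ M.N i w, M.sat v ψ
      constructor
      · intro h v hv
        exact (ih hmψ v).1 (h _ ⟨w, v, rfl, rfl, hv⟩)
      · rintro h y ⟨w2, v, hw2, rfl, hv⟩
        rw [ih hmψ v]
        have hrel : filtRel M (Sphi φ) w2 w := Quotient.exact hw2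
        have hw2sat : M.sat w2 (Frm.impbel i ψ) :=
          (hrel (Frm.impbel i ψ) hmem).2 h
        exact hw2sat v hv

/-- The transformed filtration is a genuine NDM. -/
lemma filt_ndm (M : PreNDM Agt) (φ : Frm Agt) (hφL : φ.isL) (hQ : isQNDM M)
    [Fintype (FW M (Sphi φ))] (ι : FW M (Sphi φ) → ℕ)
    (hinj : Function.Injective ι) (hfresh : ∀ x, ι x ∉ φ.atomsOf) :
    isNDM (filtModel' M (Sphi φ) φ.atomsOf ι) := by
  refine ⟨?_, ?_, ?_⟩
  · -- belief bases consist of L0 formulas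
    rintro i x α (⟨hmem, _⟩ | hch)
    · exact (isL_subf (show Frm.expbel i α ∈ subf φ from hmem) hφL : (Frm.expbel i α).isL)
    · simp only [Set.mem_singleton_iff] at hch
      subst hch
      refine isL0_bigOr ?_
      intro ψ hψ
      obtain ⟨y, _, rfl⟩ := List.mem_map.1 hψ
      trivial
  · -- C1
    intro i x
    ext y
    constructor
    · rintro hy α hα
      obtain ⟨w2, v, hw2, hyv, hv⟩ := hy
      rcases hα with ⟨hmem, w1, hw1, hD⟩ | hch
      · have hrel : filtRel M (Sphi φ) w1 w2 := Quotient.exact (hw1.trans hw2.symm)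
        have hD2 : α ∈ M.D i w2 :=
          (show α ∈ M.D i w1 ↔ α ∈ M.D i w2 from hrel (Frm.expbel i α) hmem).1 hD
        have hsatv : M.sat v α := hQ.2.1 i w2 v hv α hD2
        have hmα : α ∈ subf φ := subf_expbel (show Frm.expbel i α ∈ subf φ from hmem)
        have := (filt_truth M φ hQ ι hfresh α hmα v).2 hsatv
        rwa [hyv] at this
      · simp only [Set.mem_singleton_iff] at hch
        subst hch
        rw [show ((filtModel' M (Sphi φ) φ.atomsOf ι).sat y (charForm M (Sphi φ) ι i x) ↔
            ∃ β ∈ ((Finset.univ.filter (fun z => z ∈ filtN' M (Sphi φ) i x)).toList).map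
              (fun z => Frm.atom (ι z)), (filtModel' M (Sphi φ) φ.atomsOf ι).sat y β) from
            sat_bigOr _ _ _]
        refine ⟨Frm.atom (ι y), List.mem_map.2 ⟨y, Finset.mem_toList.2
          (Finset.mem_filter.2 ⟨Finset.mem_univ _, ⟨w2, v, hw2, hyv, hv⟩⟩), rfl⟩, ?_⟩
        exact Or.inr rfl
    · intro hall
      have hch := hall (charForm M (Sphi φ) ι i x) (Or.inr rfl)
      rw [show ((filtModel' M (Sphi φ) φ.atomsOf ι).sat y (charForm M (Sphi φ) ι i x) ↔
          ∃ β ∈ ((Finset.univ.filter (fun z => z ∈ filtN' M (Sphi φ) i x)).toList).map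
            (fun z => Frm.atom (ι z)), (filtModel' M (Sphi φ) φ.atomsOf ι).sat y β) from
          sat_bigOr _ _ _] at hch
      obtain ⟨β, hβ, hsβ⟩ := hch
      obtain ⟨z, hz, rfl⟩ := List.mem_map.1 hβ
      have hzN : z ∈ filtN' M (Sphi φ) i x :=
        (Finset.mem_filter.1 (Finset.mem_toList.1 hz)).2
      rcases hsβ with ⟨hpA, -⟩ | heq
      · exact absurd hpA (hfresh z)
      · have : y = z := hinj heq
        exact this ▸ hzN
  · -- C2
    intro i x
    obtain ⟨w, rfl⟩ := Quotient.exists_rep x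
    obtain ⟨v, hv⟩ := hQ.2.2 i w
    exact ⟨filtMk M (Sphi φ) v, w, v, rfl, rfl, hv⟩

end LDAPaper

namespace LDAPaper

/-- **Soundness and completeness for NDMs.** A formula `φ ∈ L` is derivable in LDA
iff `φ` is valid for the class of notional doxastic models. -/
theorem soundness_completeness_ndm (Agt : Type) [Fintype Agt] (φ : Frm Agt)
    (hφ : φ.isL) :
    LDA φ ↔ ∀ M : PreNDM Agt, isNDM M → ∀ w : M.W, M.sat w φ := by
  classical
  constructor
  · intro h M hM w
    exact lda_sound h M hM w
  · intro hval
    by_contra hnd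
    have hcons := consistent_singleton_neg hφ hnd
    obtain ⟨Γ, hΓ, hsub⟩ := lindenbaum (Δ := {Frm.neg φ})
      (by
        intro e he
        simp only [Set.mem_singleton_iff] at he
        subst he
        exact (hφ : (Frm.neg φ).isL)) hcons
    have hneg : Frm.neg φ ∈ Γ := hsub (Set.mem_singleton _)
    have hnotsat : ¬ (canonM Agt).sat ⟨Γ, hΓ⟩ φ := by
      intro hs
      exact hΓ.not_both ((truth_lemma hφ ⟨Γ, hΓ⟩).1 hs) hneg
    have hQ : isQNDM (canonM Agt) := canonM_qndm
    -- the filtration has finitely many worlds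
    have hresp : ∀ (a b : (canonM Agt).W), filtRel (canonM Agt) (Sphi φ) a b →
        (fun (w : (canonM Agt).W) (q : {ψ : Frm Agt // ψ ∈ subf φ}) =>
          decide ((canonM Agt).sat w q.1)) a =
        (fun (w : (canonM Agt).W) (q : {ψ : Frm Agt // ψ ∈ subf φ}) =>
          decide ((canonM Agt).sat w q.1)) b := by
      intro a b hab
      funext q
      exact decide_eq_decide.2 (hab q.1 q.2)
    let g : FW (canonM Agt) (Sphi φ) → ({ψ : Frm Agt // ψ ∈ subf φ} → Bool) :=
      Quotient.lift _ hresp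
    have hginj : Function.Injective g := by
      intro x y
      refine Quotient.inductionOn₂ x y ?_
      intro a b hab
      refine Quotient.sound ?_
      intro ψ hψ
      exact decide_eq_decide.1 (congrFun hab ⟨ψ, hψ⟩)
    haveI : Finite {ψ : Frm Agt // ψ ∈ subf φ} := ((subf φ).finite_toSet).to_subtype
    haveI : Finite (FW (canonM Agt) (Sphi φ)) := Finite.of_injective g hginj
    haveI : Fintype (FW (canonM Agt) (Sphi φ)) := Fintype.ofFinite _
    -- choose fresh atoms naming the worlds of the filtration
    have hAfin : φ.atomsOf.Finite := atomsOf_finite φ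
    have hinfc : (φ.atomsOfᶜ : Set ℕ).Infinite := hAfin.infinite_compl
    haveI := hinfc.to_subtype
    haveI : Countable (FW (canonM Agt) (Sphi φ)) := Finite.to_countable
    obtain ⟨f, hf⟩ := (countable_iff_exists_injective (FW (canonM Agt) (Sphi φ))).1
      inferInstance
    let e := Infinite.natEmbedding (↥(φ.atomsOfᶜ : Set ℕ))
    let ι : FW (canonM Agt) (Sphi φ) → ℕ := fun x => (e (f x)).1
    have hιinj : Function.Injective ι := by
      intro a b h
      exact hf (e.injective (Subtype.coe_injective h))
    have hfresh : ∀ x, ι x ∉ φ.atomsOf := fun x => (e (f x)).2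
    -- the transformed filtration refutes φ
    have hndm := filt_ndm (canonM Agt) φ hφ hQ ι hιinj hfresh
    have ht := filt_truth (canonM Agt) φ hQ ι hfresh φ (self_mem_subf φ) ⟨Γ, hΓ⟩
    exact hnotsat (ht.1 (hval _ hndm _))

end LDAPaper
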